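/- Let G₀ ∈ ℝ^{n×n}, C ∈ ℝ^{p×n} with CG₀ = 0, let H ∈ ℝ^{n×p} and μ ∈ ℝ, and set G_d = μG₀ + I_n. Define F : ℝ^n → ℝ^n by F(x) = exp(μ(G₀ + I_n)·ln|Cx|)·H·Cx if Cx ≠ 0 and F(x) = 0 if Cx = 0, where |·| is the Euclidean norm. Then F is homogeneous of degree μ with respect to the dilation d(s) = exp(sG_d): for all s ∈ ℝ and all x ∈ ℝ^n, F(exp(sG_d)x) = e^{μs}·exp(sG_d)·F(x). -/

import Mathlib

/-
Statement 7: d-homogeneity of degree μ of the nonlinear output-injection term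
F(x) = exp(μ(G₀+I)·ln|Cx|)·H·Cx (extended by 0 when Cx = 0), for the dilation
d(s) = exp(s(μG₀ + I)).
-/

open Matrix

/-- The Euclidean norm of a finitely-indexed real vector. -/
noncomputable def euclNorm {ι : Type*} [Fintype ι] (x : ι → ℝ) : ℝ :=
  Real.sqrt (x ⬝ᵥ x)

section Aux

variable {n p : ℕ}

/-- `C * exp A = C` when `C * A = 0`. -/
lemma aux_mul_exp_of_mul_eq_zero (C : Matrix (Fin p) (Fin n) ℝ) (A : Matrix (Fin n) (Fin n) ℝ)
    (h : C * A = 0) : C * NormedSpace.exp A = C := by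
  letI : SeminormedRing (Matrix (Fin n) (Fin n) ℝ) := Matrix.linftyOpSemiNormedRing
  letI : NormedRing (Matrix (Fin n) (Fin n) ℝ) := Matrix.linftyOpNormedRing
  letI : NormedAlgebra ℝ (Matrix (Fin n) (Fin n) ℝ) := Matrix.linftyOpNormedAlgebra
  let L : Matrix (Fin n) (Fin n) ℝ →ₗ[ℝ] Matrix (Fin p) (Fin n) ℝ :=
    { toFun := fun X => C * X
      map_add' := fun X Y => Matrix.mul_add C X Y
      map_smul' := fun r X => (Matrix.mul_smul C r X) }
  have hcont : Continuous L := L.continuous_of_finiteDimensional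
  have hsum : Summable fun k : ℕ => ((k.factorial : ℝ))⁻¹ • A ^ k :=
    NormedSpace.expSeries_summable' A
  have hmap : C * NormedSpace.exp A = ∑' k : ℕ, C * (((k.factorial : ℝ))⁻¹ • A ^ k) := by
    rw [NormedSpace.exp_eq_tsum ℝ]
    exact (hsum.hasSum.map L hcont).tsum_eq.symm
  rw [hmap, tsum_eq_single 0]
  · simp
  · intro b hb
    obtain ⟨k, rfl⟩ := Nat.exists_eq_succ_of_ne_zero hb
    rw [Matrix.mul_smul, pow_succ', ← Matrix.mul_assoc, h, Matrix.zero_mul, smul_zero]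

lemma aux_exp_smul_one (c : ℝ) :
    NormedSpace.exp (c • (1 : Matrix (Fin n) (Fin n) ℝ)) = Real.exp c • 1 := by
  letI : SeminormedRing (Matrix (Fin n) (Fin n) ℝ) := Matrix.linftyOpSemiNormedRing
  letI : NormedRing (Matrix (Fin n) (Fin n) ℝ) := Matrix.linftyOpNormedRing
  letI : NormedAlgebra ℝ (Matrix (Fin n) (Fin n) ℝ) := Matrix.linftyOpNormedAlgebra
  have h1 : (c • (1 : Matrix (Fin n) (Fin n) ℝ)) = algebraMap ℝ _ c :=
    (Algebra.algebraMap_eq_smul_one c).symm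
  have h2 := NormedSpace.algebraMap_exp_comm (𝔸 := Matrix (Fin n) (Fin n) ℝ) c
  rw [← Real.exp_eq_exp_ℝ] at h2
  rw [h1, ← Algebra.algebraMap_eq_smul_one]
  exact h2.symm

/-- `exp (a•G + b•1) = e^b • exp (a•G)`. -/
lemma aux_exp_decomp (G : Matrix (Fin n) (Fin n) ℝ) (a b : ℝ) :
    NormedSpace.exp (a • G + b • (1 : Matrix (Fin n) (Fin n) ℝ))
      = Real.exp b • NormedSpace.exp (a • G) := by
  have hc : Commute (a • G) (b • (1 : Matrix (Fin n) (Fin n) ℝ)) :=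
    ((Commute.one_right G).smul_left a).smul_right b
  rw [Matrix.exp_add_of_commute _ _ hc, aux_exp_smul_one, Matrix.mul_smul, mul_one]

/-- exponentials of commuting scalar multiples of `G` multiply by adding scalars. -/
lemma aux_exp_smul_add (G : Matrix (Fin n) (Fin n) ℝ) (a b : ℝ) :
    NormedSpace.exp ((a + b) • G)
      = NormedSpace.exp (a • G) * NormedSpace.exp (b • G) := by
  rw [add_smul]
  exact Matrix.exp_add_of_commute _ _ (((Commute.refl G).smul_left a).smul_right b)

lemma aux_euclNorm_smul (c : ℝ) (hc : 0 ≤ c) (v : Fin p → ℝ) :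
    euclNorm (c • v) = c * euclNorm v := by
  unfold euclNorm
  rw [smul_dotProduct, dotProduct_smul, smul_eq_mul, smul_eq_mul, ← mul_assoc,
    Real.sqrt_mul (mul_self_nonneg c), Real.sqrt_mul_self hc]

lemma aux_euclNorm_pos {v : Fin p → ℝ} (hv : v ≠ 0) : 0 < euclNorm v := by
  unfold euclNorm
  apply Real.sqrt_pos.2
  rcases lt_or_eq_of_le (Finset.sum_nonneg fun i _ => mul_self_nonneg (v i)) with h | h
  · exact h
  · exact absurd (dotProduct_self_eq_zero.1 h.symm) hv

end Aux

theorem injection_term_homogeneous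
    (n p : ℕ)
    (G₀ : Matrix (Fin n) (Fin n) ℝ)
    (C : Matrix (Fin p) (Fin n) ℝ)
    (hCG₀ : C * G₀ = 0)
    (H : Matrix (Fin n) (Fin p) ℝ)
    (μ : ℝ)
    (F : (Fin n → ℝ) → (Fin n → ℝ))
    (hF0 : ∀ x : Fin n → ℝ, C.mulVec x = 0 → F x = 0)
    (hF : ∀ x : Fin n → ℝ, C.mulVec x ≠ 0 →
      F x = (NormedSpace.exp
          ((μ * Real.log (euclNorm (C.mulVec x))) • (G₀ + 1))).mulVec
        (H.mulVec (C.mulVec x))) :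
    ∀ (s : ℝ) (x : Fin n → ℝ),
      F ((NormedSpace.exp (s • (μ • G₀ + 1))).mulVec x)
        = Real.exp (μ * s) • (NormedSpace.exp (s • (μ • G₀ + 1))).mulVec (F x) := by
  intro s x
  set E : Matrix (Fin n) (Fin n) ℝ := NormedSpace.exp (s • (μ • G₀ + 1)) with hE
  -- decomposition of the dilation exponent
  have hdecomp : s • (μ • G₀ + 1) = (s * μ) • G₀ + s • (1 : Matrix (Fin n) (Fin n) ℝ) := by
    rw [smul_add, smul_smul]
  have hEeq : E = Real.exp s • NormedSpace.exp ((s * μ) • G₀) := by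
    rw [hE, hdecomp, aux_exp_decomp]
  -- key output identity : C * E = e^s • C
  have hCE : C * E = Real.exp s • C := by
    rw [hEeq, Matrix.mul_smul]
    congr 1
    exact aux_mul_exp_of_mul_eq_zero C _ (by rw [Matrix.mul_smul, hCG₀, smul_zero])
  have hCx' : C.mulVec (E.mulVec x) = Real.exp s • C.mulVec x := by
    rw [Matrix.mulVec_mulVec, hCE, Matrix.smul_mulVec]
  by_cases hx : C.mulVec x = 0
  · rw [hF0 _ hx, hF0 _ (by rw [hCx', hx, smul_zero]), Matrix.mulVec_zero, smul_zero]
  · have hx' : C.mulVec (E.mulVec x) ≠ 0 := by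
      rw [hCx']
      exact smul_ne_zero (Real.exp_ne_zero s) hx
    set L : ℝ := Real.log (euclNorm (C.mulVec x)) with hL
    have hnorm : euclNorm (C.mulVec (E.mulVec x)) = Real.exp s * euclNorm (C.mulVec x) := by
      rw [hCx', aux_euclNorm_smul _ (Real.exp_pos s).le]
    have hlog : Real.log (euclNorm (C.mulVec (E.mulVec x))) = s + L := by
      rw [hnorm, Real.log_mul (Real.exp_ne_zero s) (aux_euclNorm_pos hx).ne', Real.log_exp, hL]
    rw [hF _ hx', hF _ hx, hlog, hCx']
    -- rewrite everything in terms of exponentials of smuls of G₀ and scalars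
    have hexp1 : ∀ c : ℝ, NormedSpace.exp (c • (G₀ + 1))
        = Real.exp c • NormedSpace.exp (c • G₀) := by
      intro c
      rw [smul_add, aux_exp_decomp]
    rw [Matrix.mulVec_smul, hexp1, hexp1, hEeq]
    simp only [Matrix.mulVec_smul, Matrix.smul_mulVec, smul_smul, ← hL]
    have hmat : (NormedSpace.exp ((μ * (s + L)) • G₀)).mulVec (H.mulVec (C.mulVec x))
        = (NormedSpace.exp ((s * μ) • G₀)).mulVec
            ((NormedSpace.exp ((μ * L) • G₀)).mulVec (H.mulVec (C.mulVec x))) := by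
      have h2 : NormedSpace.exp ((μ * (s + L)) • G₀)
          = NormedSpace.exp ((s * μ) • G₀) * NormedSpace.exp ((μ * L) • G₀) := by
        rw [← aux_exp_smul_add]
        ring_nf
      rw [h2, ← Matrix.mulVec_mulVec]
    rw [hmat]
    congr 1
    rw [show μ * (s + L) = μ * s + μ * L by ring, Real.exp_add]
    ring
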